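/- Every loopless digraph that contains neither K_3 nor the directed path on 4 vertices as a subgraph admits a homomorphism to the digraph C⃗_3^{++}, which is the directed 3-cycle on vertices {1,2,3} with edges (1,2),(2,3),(3,1) together with the extra edges (1,3) and (3,2). -/

import Mathlib

/-- C⃗_3^{++} on vertices 0,1,2 (standing for 1,2,3): the directed 3-cycle
(0,1),(1,2),(2,0) with extra edges (0,2) and (2,1). -/
def C3pp : Fin 3 → Fin 3 → Prop := fun i j =>
  (i, j) = (0, 1) ∨ (i, j) = (1, 2) ∨ (i, j) = (2, 0) ∨ (i, j) = (0, 2) ∨ (i, j) = (2, 1)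

set_option linter.unusedSectionVars false

namespace Stmt7Aux

variable {V : Type} {E : V → V → Prop}

def pr (E : V → V → Prop) (v w : V) : Prop := E v w ∧ E w v
def tri (E : V → V → Prop) (v : V) : Prop := ∃ a b, E v a ∧ E a b ∧ E b v
def star (E : V → V → Prop) (v : V) : Prop := ∃ w₁ w₂, w₁ ≠ w₂ ∧ pr E v w₁ ∧ pr E v w₂
def nb (E : V → V → Prop) (v w : V) : Prop := w = v ∨ E v w ∨ E w v
def extIn (E : V → V → Prop) (v : V) : Prop := ∃ x, E x v ∧ ¬ pr E v x
def extOut (E : V → V → Prop) (v : V) : Prop := ∃ y, E v y ∧ ¬ pr E v y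

open Classical in
noncomputable def lmin (S : Set V) (d : V) : V :=
  if h : S.Nonempty then (IsWellFounded.wf (r := (WellOrderingRel : V → V → Prop))).min S h
  else d

lemma lmin_mem {S : Set V} {d : V} (h : S.Nonempty) : lmin S d ∈ S := by
  unfold lmin; rw [dif_pos h]; exact WellFounded.min_mem _ S h

lemma lmin_not_lt {S : Set V} {d : V} (h : S.Nonempty) {x : V} (hx : x ∈ S) :
    ¬ WellOrderingRel x (lmin S d) := by
  unfold lmin; rw [dif_pos h]; exact WellFounded.not_lt_min _ S hx

lemma lmin_congr {S S' : Set V} {d d' : V} (hiff : ∀ x, x ∈ S ↔ x ∈ S')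
    (h : S.Nonempty) : lmin S d = lmin S' d' := by
  have h' : S'.Nonempty := ⟨h.choose, (hiff _).mp h.choose_spec⟩
  rcases trichotomous (r := (WellOrderingRel : V → V → Prop)) (lmin S d) (lmin S' d')
    with hlt | heq | hgt
  · exact absurd hlt (lmin_not_lt h' ((hiff _).mp (lmin_mem h)))
  · exact heq
  · exact absurd hgt (lmin_not_lt h ((hiff _).mpr (lmin_mem h')))

lemma lmin_unique {S : Set V} {d y : V} (hy : y ∈ S) (huniq : ∀ z ∈ S, z = y) :
    lmin S d = y :=
  huniq _ (lmin_mem ⟨y, hy⟩)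

noncomputable def triA (E : V → V → Prop) (v : V) : Set V :=
  {x | nb E v x ∧ ∃ y, nb E v y ∧ E x y ∧ ¬ E y x}

noncomputable def triX (E : V → V → Prop) (v : V) : V := lmin (triA E v) v

noncomputable def triY (E : V → V → Prop) (v : V) : V :=
  lmin {y | nb E v y ∧ E (triX E v) y ∧ ¬ E y (triX E v)} v

open Classical in
noncomputable def fpair (E : V → V → Prop) (v : V) : Fin 3 :=
  if extIn E v ∧ extOut E v then 2
  else if ∃ w, pr E v w ∧ extIn E w ∧ extOut E w then (if extIn E v then 1 else 0)
  else if ∃ w, pr E v w ∧ WellOrderingRel v w then 2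
  else if extIn E v then 1 else 0

open Classical in
noncomputable def f (E : V → V → Prop) (v : V) : Fin 3 :=
  if (∃ x, E x v) ∧ (∃ y, E v y) then
    if tri E v then (if v = triX E v then 0 else if v = triY E v then 1 else 2)
    else if star E v then 2
    else if ∃ w, pr E v w ∧ star E w then 0
    else if ∃ w, pr E v w then fpair E v
    else 2
  else if ∃ x, E x v then 1 else 0

section Lemmas

variable (hloop : ∀ v : V, ¬ E v v)
variable (hK3 : ¬ ∃ x y z : V, x ≠ y ∧ y ≠ z ∧ x ≠ z ∧
      E x y ∧ E y x ∧ E y z ∧ E z y ∧ E x z ∧ E z x)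
variable (hP4 : ¬ ∃ x1 x2 x3 x4 : V, x1 ≠ x2 ∧ x1 ≠ x3 ∧ x1 ≠ x4 ∧ x2 ≠ x3 ∧ x2 ≠ x4 ∧ x3 ≠ x4 ∧
      E x1 x2 ∧ E x2 x3 ∧ E x3 x4)

include hloop hP4 in
lemma p4 {a b c d : V} (h1 : E a b) (h2 : E b c) (h3 : E c d)
    (hac : a ≠ c) (had : a ≠ d) (hbd : b ≠ d) : False := by
  refine hP4 ⟨a, b, c, d, ?_, hac, had, ?_, hbd, ?_, h1, h2, h3⟩
  · rintro rfl; exact hloop _ h1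
  · rintro rfl; exact hloop _ h2
  · rintro rfl; exact hloop _ h3

include hloop hK3 in
lemma k3 {x y z : V} (h1 : E x y) (h2 : E y x) (h3 : E y z) (h4 : E z y)
    (h5 : E x z) (h6 : E z x) : False := by
  refine hK3 ⟨x, y, z, ?_, ?_, ?_, h1, h2, h3, h4, h5, h6⟩
  · rintro rfl; exact hloop _ h1
  · rintro rfl; exact hloop _ h3
  · rintro rfl; exact hloop _ h5

include hloop hP4 in
lemma tri_out {v a b : V} (h1 : E v a) (h2 : E a b) (h3 : E b v) :
    ∀ y, E v y → y = a ∨ y = b := by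
  intro y hy
  by_contra hcon
  push_neg at hcon
  refine p4 hloop hP4 h2 h3 hy ?_ (Ne.symm hcon.1) (Ne.symm hcon.2)
  rintro rfl; exact hloop _ h1

include hloop hP4 in
lemma tri_in {v a b : V} (h1 : E v a) (h2 : E a b) (h3 : E b v) :
    ∀ x, E x v → x = a ∨ x = b := by
  intro x hx
  by_contra hcon
  push_neg at hcon
  refine p4 hloop hP4 hx h1 h2 hcon.1 hcon.2 ?_
  rintro rfl; exact hloop _ h3

include hloop hP4 in
lemma tri_closed {v u : V} (ht : tri E v) (h : E u v ∨ E v u) : tri E u := by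
  obtain ⟨a, b, h1, h2, h3⟩ := ht
  have hcase : u = a ∨ u = b := by
    rcases h with h | h
    · exact tri_in hloop hP4 h1 h2 h3 u h
    · exact tri_out hloop hP4 h1 h2 h3 u h
  rcases hcase with rfl | rfl
  · exact ⟨b, v, h2, h3, h1⟩
  · exact ⟨v, a, h3, h1, h2⟩

include hloop hP4 in
lemma medge {u v : V} (hu : ∃ x, E x u) (hv : ∃ y, E v y) (huv : E u v) :
    pr E u v ∨ (tri E u ∧ tri E v) := by
  by_cases hvu : E v u
  · exact Or.inl ⟨huv, hvu⟩
  obtain ⟨x, hx⟩ := hu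
  obtain ⟨y, hy⟩ := hv
  have hxv : x ≠ v := by rintro rfl; exact hvu hx
  have hyu : y ≠ u := by rintro rfl; exact hvu hy
  by_cases hxy : x = y
  · subst hxy
    exact Or.inr ⟨⟨v, x, huv, hy, hx⟩, ⟨x, u, hy, hx, huv⟩⟩
  · exact absurd (p4 hloop hP4 hx huv hy hxv hxy (Ne.symm hyu)) id

include hloop hK3 hP4 in
lemma chain {u v w : V} (hvw : pr E v w) (hvu : pr E v u) (huw : u ≠ w)
    (htw : ¬ tri E w) : (∀ t, E w t → t = v) ∧ (∀ t, E t w → t = v) := by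
  constructor
  · intro t ht
    by_contra htv
    by_cases htu : t = u
    · subst htu
      -- E w t = E w u
      rcases medge hloop hP4 ⟨v, hvw.1⟩ ⟨v, hvu.2⟩ ht with hpwu | ⟨h1, _⟩
      · exact k3 hloop hK3 hvu.1 hvu.2 hpwu.2 hpwu.1 hvw.1 hvw.2
      · exact htw h1
    · exact p4 hloop hP4 hvu.2 hvw.1 ht huw (Ne.symm htu) (Ne.symm htv)
  · intro t ht
    by_contra htv
    by_cases htu : t = u
    · subst htu
      rcases medge hloop hP4 ⟨v, hvu.1⟩ ⟨v, hvw.2⟩ ht with hpuw | ⟨_, h2⟩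
      · exact k3 hloop hK3 hvu.1 hvu.2 hpuw.1 hpuw.2 hvw.1 hvw.2
      · exact htw h2
    · exact p4 hloop hP4 ht hvw.2 hvu.1 htv htu (Ne.symm huw)

include hloop hK3 hP4 in
lemma star_leaf {v w : V} (hs : star E v) (htv : ¬ tri E v) (hw : pr E v w) :
    (∀ t, E w t → t = v) ∧ (∀ t, E t w → t = v) := by
  have htw : ¬ tri E w := fun h => htv (tri_closed hloop hP4 h (Or.inl hw.1))
  obtain ⟨w1, w2, h12, hp1, hp2⟩ := hs
  by_cases h1w : w1 = w
  · refine chain hloop hK3 hP4 hw hp2 ?_ htw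
    rintro rfl; exact h12 h1w
  · exact chain hloop hK3 hP4 hw hp1 h1w htw

include hloop hK3 hP4 in
lemma no_inout {u v : V} (htu : ¬ tri E u) (hp : pr E u v)
    (hi : extIn E u) (ho : extOut E v) : False := by
  obtain ⟨x, hxu, hnpx⟩ := hi
  obtain ⟨y, hvy, hnpy⟩ := ho
  have hxv : x ≠ v := by rintro rfl; exact hnpx hp
  have hyu : y ≠ u := by rintro rfl; exact hnpy ⟨hp.2, hp.1⟩
  by_cases hxy : x = y
  · subst hxy
    rcases medge hloop hP4 ⟨v, hvy⟩ ⟨v, hp.1⟩ hxu with hpxu | ⟨_, h2⟩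
    · exact hnpx ⟨hpxu.2, hpxu.1⟩
    · exact htu h2
  · exact p4 hloop hP4 hxu hp.1 hvy hxv hxy (Ne.symm hyu)

lemma pr_unique {v w w' : V} (hns : ¬ star E v) (h1 : pr E v w) (h2 : pr E v w') :
    w = w' := by
  by_contra h
  exact hns ⟨w, w', h, h1, h2⟩

include hloop hP4 in
lemma nb_iff {x y z : V} (h1 : E x y) (h2 : E y z) (h3 : E z x) :
    ∀ t, (t = x ∨ t = y ∨ t = z) → ∀ w, (nb E t w ↔ (w = x ∨ w = y ∨ w = z)) := by
  have out_x := tri_out hloop hP4 h1 h2 h3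
  have out_y := tri_out hloop hP4 h2 h3 h1
  have out_z := tri_out hloop hP4 h3 h1 h2
  have in_x := tri_in hloop hP4 h1 h2 h3
  have in_y := tri_in hloop hP4 h2 h3 h1
  have in_z := tri_in hloop hP4 h3 h1 h2
  intro t ht w
  constructor
  · rintro (rfl | hw | hw)
    · exact ht
    · rcases ht with rfl | rfl | rfl
      · rcases out_x w hw with rfl | rfl
        · exact Or.inr (Or.inl rfl)
        · exact Or.inr (Or.inr rfl)
      · rcases out_y w hw with rfl | rfl
        · exact Or.inr (Or.inr rfl)
        · exact Or.inl rfl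
      · rcases out_z w hw with rfl | rfl
        · exact Or.inl rfl
        · exact Or.inr (Or.inl rfl)
    · rcases ht with rfl | rfl | rfl
      · rcases in_x w hw with rfl | rfl
        · exact Or.inr (Or.inl rfl)
        · exact Or.inr (Or.inr rfl)
      · rcases in_y w hw with rfl | rfl
        · exact Or.inr (Or.inr rfl)
        · exact Or.inl rfl
      · rcases in_z w hw with rfl | rfl
        · exact Or.inl rfl
        · exact Or.inr (Or.inl rfl)
  · intro hw
    rcases ht with rfl | rfl | rfl <;> rcases hw with rfl | rfl | rfl <;>
      simp [nb, h1, h2, h3]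

include hloop hK3 hP4 in
lemma triA_ne {x y z : V} (h1 : E x y) (h2 : E y z) (h3 : E z x) :
    (triA E x).Nonempty := by
  by_cases hyx : E y x
  · by_cases hzy : E z y
    · by_cases hxz : E x z
      · exact absurd (k3 hloop hK3 h1 hyx h2 hzy hxz h3) id
      · exact ⟨z, Or.inr (Or.inr h3), x, Or.inl rfl, h3, hxz⟩
    · exact ⟨y, Or.inr (Or.inl h1), z, Or.inr (Or.inr h3), h2, hzy⟩
  · exact ⟨x, Or.inl rfl, y, Or.inr (Or.inl h1), h1, hyx⟩


-- f evaluation lemmas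
lemma f_src {v : V} (h : ¬ ∃ x, E x v) : f E v = 0 := by
  unfold f
  rw [if_neg (fun hc : (∃ x, E x v) ∧ (∃ y, E v y) => h hc.1), if_neg h]

lemma f_snk {v : V} (hin : ∃ x, E x v) (hout : ¬ ∃ y, E v y) : f E v = 1 := by
  unfold f
  rw [if_neg (fun hc : (∃ x, E x v) ∧ (∃ y, E v y) => hout hc.2), if_pos hin]

open Classical in
lemma f_tri {v : V} (hin : ∃ x, E x v) (hout : ∃ y, E v y) (ht : tri E v) :
    f E v = if v = triX E v then 0 else if v = triY E v then 1 else 2 := by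
  unfold f
  rw [if_pos ⟨hin, hout⟩, if_pos ht]

lemma f_star {v : V} (hin : ∃ x, E x v) (hout : ∃ y, E v y) (ht : ¬ tri E v)
    (hs : star E v) : f E v = 2 := by
  unfold f
  rw [if_pos ⟨hin, hout⟩, if_neg ht, if_pos hs]

lemma f_leaf {v : V} (hin : ∃ x, E x v) (hout : ∃ y, E v y) (ht : ¬ tri E v)
    (hs : ¬ star E v) (hl : ∃ w, pr E v w ∧ star E w) : f E v = 0 := by
  unfold f
  rw [if_pos ⟨hin, hout⟩, if_neg ht, if_neg hs, if_pos hl]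

lemma f_pair {v : V} (hin : ∃ x, E x v) (hout : ∃ y, E v y) (ht : ¬ tri E v)
    (hs : ¬ star E v) (hl : ¬ ∃ w, pr E v w ∧ star E w) (hp : ∃ w, pr E v w) :
    f E v = fpair E v := by
  unfold f
  rw [if_pos ⟨hin, hout⟩, if_neg ht, if_neg hs, if_neg hl, if_pos hp]

lemma f_lone {v : V} (hin : ∃ x, E x v) (hout : ∃ y, E v y) (ht : ¬ tri E v)
    (hs : ¬ star E v) (hl : ¬ ∃ w, pr E v w ∧ star E w) (hp : ¬ ∃ w, pr E v w) :
    f E v = 2 := by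
  unfold f
  rw [if_pos ⟨hin, hout⟩, if_neg ht, if_neg hs, if_neg hl, if_neg hp]

lemma fpair_f {v : V} (h : extIn E v ∧ extOut E v) : fpair E v = 2 := by
  unfold fpair; rw [if_pos h]

open Classical in
lemma fpair_pf {v : V} (h1 : ¬ (extIn E v ∧ extOut E v))
    (h2 : ∃ w, pr E v w ∧ extIn E w ∧ extOut E w) :
    fpair E v = if extIn E v then 1 else 0 := by
  unfold fpair; rw [if_neg h1, if_pos h2]

lemma fpair_lt {v : V} (h1 : ¬ (extIn E v ∧ extOut E v))
    (h2 : ¬ ∃ w, pr E v w ∧ extIn E w ∧ extOut E w)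
    (h3 : ∃ w, pr E v w ∧ WellOrderingRel v w) : fpair E v = 2 := by
  unfold fpair; rw [if_neg h1, if_neg h2, if_pos h3]

open Classical in
lemma fpair_gt {v : V} (h1 : ¬ (extIn E v ∧ extOut E v))
    (h2 : ¬ ∃ w, pr E v w ∧ extIn E w ∧ extOut E w)
    (h3 : ¬ ∃ w, pr E v w ∧ WellOrderingRel v w) :
    fpair E v = if extIn E v then 1 else 0 := by
  unfold fpair; rw [if_neg h1, if_neg h2, if_neg h3]

-- C3pp facts
lemma c01 : C3pp 0 1 := Or.inl rfl
lemma c12 : C3pp 1 2 := Or.inr (Or.inl rfl)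
lemma c20 : C3pp 2 0 := Or.inr (Or.inr (Or.inl rfl))
lemma c02 : C3pp 0 2 := Or.inr (Or.inr (Or.inr (Or.inl rfl)))
lemma c21 : C3pp 2 1 := Or.inr (Or.inr (Or.inr (Or.inr rfl)))

include hloop hP4 in
lemma tri_core {x y z u w : V}
    (h1 : E x y) (h2 : E y z) (h3 : E z x) (hyx : ¬ E y x) (hX : triX E x = x)
    (hu : u = x ∨ u = y ∨ u = z) (huw : E u w) : C3pp (f E u) (f E w) := by
  classical
  have hT := nb_iff hloop hP4 h1 h2 h3
  have hxy : x ≠ y := by rintro rfl; exact hloop _ h1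
  have hyz : y ≠ z := by rintro rfl; exact hloop _ h2
  have hzx : z ≠ x := by rintro rfl; exact hloop _ h3
  have hxmem : x ∈ triA E x := ⟨Or.inl rfl, y, Or.inr (Or.inl h1), h1, hyx⟩
  have hXt : ∀ t, (t = x ∨ t = y ∨ t = z) → triX E t = x := by
    intro t ht
    have hiff : ∀ p, p ∈ triA E t ↔ p ∈ triA E x := by
      have hnb : ∀ w, nb E t w ↔ nb E x w :=
        fun w => (hT t ht w).trans ((hT x (Or.inl rfl) w).symm)
      intro p
      simp only [triA, Set.mem_setOf_eq, hnb]
    have hnet : (triA E t).Nonempty := ⟨x, (hiff x).mpr hxmem⟩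
    calc triX E t = lmin (triA E t) t := rfl
      _ = lmin (triA E x) x := lmin_congr hiff hnet
      _ = x := hX
  have hYt : ∀ t, (t = x ∨ t = y ∨ t = z) → triY E t = y := by
    intro t ht
    unfold triY
    rw [hXt t ht]
    apply lmin_unique
    · exact ⟨(hT t ht y).mpr (Or.inr (Or.inl rfl)), h1, hyx⟩
    · rintro q ⟨hq1, hq2, hq3⟩
      rcases (hT t ht q).mp hq1 with h | h | h
      · rw [h] at hq2; exact absurd hq2 (hloop x)
      · exact h
      · rw [h] at hq3; exact absurd h3 hq3
  have hfval : ∀ t, (t = x ∨ t = y ∨ t = z) →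
      f E t = if t = x then (0 : Fin 3) else if t = y then 1 else 2 := by
    intro t ht
    have hin : ∃ p, E p t := by
      rcases ht with rfl | rfl | rfl
      exacts [⟨z, h3⟩, ⟨x, h1⟩, ⟨y, h2⟩]
    have hout : ∃ q, E t q := by
      rcases ht with rfl | rfl | rfl
      exacts [⟨y, h1⟩, ⟨z, h2⟩, ⟨x, h3⟩]
    have htri : tri E t := by
      rcases ht with rfl | rfl | rfl
      exacts [⟨y, z, h1, h2, h3⟩, ⟨z, x, h2, h3, h1⟩, ⟨x, y, h3, h1, h2⟩]
    rw [f_tri hin hout htri, hXt t ht, hYt t ht]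
  have hw : w = x ∨ w = y ∨ w = z := (hT u hu w).mp (Or.inr (Or.inl huw))
  rw [hfval u hu, hfval w hw]
  rcases hu with h | h | h <;> rcases hw with h' | h' | h' <;> rw [h, h'] at huw ⊢
  · exact absurd huw (hloop x)
  · rw [if_pos rfl, if_neg (Ne.symm hxy), if_pos rfl]; exact c01
  · rw [if_pos rfl, if_neg hzx, if_neg (Ne.symm hyz)]; exact c02
  · exact absurd huw hyx
  · exact absurd huw (hloop y)
  · rw [if_neg (Ne.symm hxy), if_pos rfl, if_neg hzx, if_neg (Ne.symm hyz)]; exact c12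
  · rw [if_neg hzx, if_neg (Ne.symm hyz), if_pos rfl]; exact c20
  · rw [if_neg hzx, if_neg (Ne.symm hyz), if_neg (Ne.symm hxy), if_pos rfl]; exact c21
  · exact absurd huw (hloop z)

include hloop hK3 hP4 in
lemma tri_f {u w : V} (ht : tri E u) (huw : E u w) : C3pp (f E u) (f E w) := by
  obtain ⟨a, b, h1, h2, h3⟩ := ht
  have hT := nb_iff hloop hP4 h1 h2 h3
  have hne : (triA E u).Nonempty := triA_ne hloop hK3 hP4 h1 h2 h3
  have hxmem : triX E u ∈ triA E u := lmin_mem hne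
  obtain ⟨hnbx, y0, hnby0, hxy0, hny0x⟩ := hxmem
  have hxT : triX E u = u ∨ triX E u = a ∨ triX E u = b := (hT u (Or.inl rfl) _).mp hnbx
  have hy0T : y0 = u ∨ y0 = a ∨ y0 = b := (hT u (Or.inl rfl) _).mp hnby0
  -- find the oriented cycle through (triX E u, y0)
  have key : ∃ z, E y0 z ∧ E z (triX E u) ∧
      ∀ t, ((t = u ∨ t = a ∨ t = b) ↔ (t = triX E u ∨ t = y0 ∨ t = z)) := by
    rcases hxT with hx | hx | hx <;> rcases hy0T with hy | hy | hy <;>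
        rw [hx, hy] at hxy0 hny0x ⊢
    · exact absurd hxy0 (hloop u)
    · exact ⟨b, h2, h3, fun t => by tauto⟩
    · exact absurd h3 hny0x
    · exact absurd h1 hny0x
    · exact absurd hxy0 (hloop a)
    · exact ⟨u, h3, h1, fun t => by tauto⟩
    · exact ⟨a, h1, h2, fun t => by tauto⟩
    · exact absurd h2 hny0x
    · exact absurd hxy0 (hloop b)
  obtain ⟨z, hyz, hzx, hTiff⟩ := key
  have hXx : triX E (triX E u) = triX E u := by
    have hxT2 : triX E u = u ∨ triX E u = a ∨ triX E u = b := hxT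
    have hnb : ∀ w, nb E (triX E u) w ↔ nb E u w :=
      fun w => (hT (triX E u) hxT2 w).trans ((hT u (Or.inl rfl) w).symm)
    have hiff : ∀ p, p ∈ triA E (triX E u) ↔ p ∈ triA E u := by
      intro p
      simp only [triA, Set.mem_setOf_eq, hnb]
    have hnex : (triA E (triX E u)).Nonempty := ⟨hne.choose, (hiff _).mpr hne.choose_spec⟩
    calc triX E (triX E u) = lmin (triA E (triX E u)) (triX E u) := rfl
      _ = lmin (triA E u) u := lmin_congr hiff hnex
      _ = triX E u := rfl
  exact tri_core hloop hP4 hxy0 hyz hzx hny0x hXx ((hTiff u).mp (Or.inl rfl)) huw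

end Lemmas
end Stmt7Aux

open Stmt7Aux

theorem stmt_7 (V : Type) (E : V → V → Prop)
    (hloop : ∀ v : V, ¬ E v v)
    (hK3 : ¬ ∃ x y z : V, x ≠ y ∧ y ≠ z ∧ x ≠ z ∧
      E x y ∧ E y x ∧ E y z ∧ E z y ∧ E x z ∧ E z x)
    (hP4 : ¬ ∃ x1 x2 x3 x4 : V, x1 ≠ x2 ∧ x1 ≠ x3 ∧ x1 ≠ x4 ∧ x2 ≠ x3 ∧ x2 ≠ x4 ∧ x3 ≠ x4 ∧
      E x1 x2 ∧ E x2 x3 ∧ E x3 x4) :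
    ∃ f : V → Fin 3, ∀ u v, E u v → C3pp (f u) (f v) := by
  classical
  refine ⟨f E, fun u v huv => ?_⟩
  by_cases htu : tri E u
  · exact tri_f hloop hK3 hP4 htu huv
  · have htv : ¬ tri E v := fun h => htu (tri_closed hloop hP4 h (Or.inl huv))
    have hUout : ∃ y, E u y := ⟨v, huv⟩
    have hVin : ∃ x, E x v := ⟨u, huv⟩
    by_cases hUin : ∃ x, E x u
    · by_cases hVout : ∃ y, E v y
      · -- both endpoints are "mid": the edge is part of a 2-cycle
        rcases medge hloop hP4 hUin hVout huv with hpr | ⟨h1, _⟩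
        · by_cases hsu : star E u
          · have hedges := star_leaf hloop hK3 hP4 hsu htu hpr
            have hnsv : ¬ star E v := by
              rintro ⟨p, q, hpq, hp, hq⟩
              exact hpq ((hedges.1 p hp.1).trans (hedges.1 q hq.1).symm)
            rw [f_star hUin hUout htu hsu,
              f_leaf hVin hVout htv hnsv ⟨u, ⟨hpr.2, hpr.1⟩, hsu⟩]
            exact c20
          · by_cases hsv : star E v
            · rw [f_leaf hUin hUout htu hsu ⟨v, hpr, hsv⟩, f_star hVin hVout htv hsv]
              exact c02
            · have hprv : pr E v u := ⟨hpr.2, hpr.1⟩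
              have hexu : ∀ {P : V → Prop}, (∃ w, pr E u w ∧ P w) → P v := by
                rintro P ⟨w, hw, hPw⟩
                rwa [pr_unique hsu hw hpr] at hPw
              have hexv : ∀ {P : V → Prop}, (∃ w, pr E v w ∧ P w) → P u := by
                rintro P ⟨w, hw, hPw⟩
                rwa [pr_unique hsv hw hprv] at hPw
              have hnlu : ¬ ∃ w, pr E u w ∧ star E w := fun h => hsv (hexu h)
              have hnlv : ¬ ∃ w, pr E v w ∧ star E w := fun h => hsu (hexv h)
              rw [f_pair hUin hUout htu hsu hnlu ⟨v, hpr⟩,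
                f_pair hVin hVout htv hsv hnlv ⟨u, hprv⟩]
              have hio1 : ¬ (extIn E u ∧ extOut E v) := fun h =>
                no_inout hloop hK3 hP4 htu hpr h.1 h.2
              have hio2 : ¬ (extIn E v ∧ extOut E u) := fun h =>
                no_inout hloop hK3 hP4 htv hprv h.1 h.2
              by_cases hfu2 : extIn E u ∧ extOut E u
              · have hnv : ¬ (extIn E v ∧ extOut E v) := fun h => hio2 ⟨h.1, hfu2.2⟩
                have hnev : ¬ extIn E v := fun h => hio2 ⟨h, hfu2.2⟩
                rw [fpair_f hfu2, fpair_pf hnv ⟨u, hprv, hfu2⟩, if_neg hnev]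
                exact c20
              · by_cases hfv2 : extIn E v ∧ extOut E v
                · have hneu : ¬ extIn E u := fun h => hio1 ⟨h, hfv2.2⟩
                  rw [fpair_f hfv2, fpair_pf hfu2 ⟨v, hpr, hfv2⟩, if_neg hneu]
                  exact c02
                · have hnpu : ¬ ∃ w, pr E u w ∧ extIn E w ∧ extOut E w :=
                    fun h => hfv2 (hexu h)
                  have hnpv : ¬ ∃ w, pr E v w ∧ extIn E w ∧ extOut E w :=
                    fun h => hfu2 (hexv h)
                  have hneuv : u ≠ v := by rintro rfl; exact hloop _ huv
                  rcases trichotomous (r := (WellOrderingRel : V → V → Prop)) u v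
                    with hr | he | hr
                  · have hnv : ¬ ∃ w, pr E v w ∧ WellOrderingRel v w := by
                      rintro ⟨w, hw, hrw⟩
                      rw [pr_unique hsv hw hprv] at hrw
                      exact (IsWellFounded.wf
                        (r := (WellOrderingRel : V → V → Prop))).asymmetric _ _ hr hrw
                    rw [fpair_lt hfu2 hnpu ⟨v, hpr, hr⟩, fpair_gt hfv2 hnpv hnv]
                    by_cases hei : extIn E v
                    · rw [if_pos hei]; exact c21
                    · rw [if_neg hei]; exact c20
                  · exact absurd he hneuv
                  · have hnu : ¬ ∃ w, pr E u w ∧ WellOrderingRel u w := by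
                      rintro ⟨w, hw, hrw⟩
                      rw [pr_unique hsu hw hpr] at hrw
                      exact (IsWellFounded.wf
                        (r := (WellOrderingRel : V → V → Prop))).asymmetric _ _ hr hrw
                    rw [fpair_gt hfu2 hnpu hnu, fpair_lt hfv2 hnpv ⟨u, hprv, hr⟩]
                    by_cases hei : extIn E u
                    · rw [if_pos hei]; exact c12
                    · rw [if_neg hei]; exact c02
        · exact absurd h1 htu
      · -- v is a sink
        rw [f_snk hVin hVout]
        have heo : extOut E u := ⟨v, huv, fun hp => hVout ⟨u, hp.2⟩⟩
        by_cases hsu : star E u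
        · rw [f_star hUin hUout htu hsu]; exact c21
        · by_cases hlu : ∃ w, pr E u w ∧ star E w
          · rw [f_leaf hUin hUout htu hsu hlu]; exact c01
          · by_cases hpu : ∃ w, pr E u w
            · rw [f_pair hUin hUout htu hsu hlu hpu]
              by_cases hf : extIn E u ∧ extOut E u
              · rw [fpair_f hf]; exact c21
              · have hnei : ¬ extIn E u := fun h => hf ⟨h, heo⟩
                by_cases hpf : ∃ w, pr E u w ∧ extIn E w ∧ extOut E w
                · rw [fpair_pf hf hpf, if_neg hnei]; exact c01
                · by_cases hlt : ∃ w, pr E u w ∧ WellOrderingRel u w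
                  · rw [fpair_lt hf hpf hlt]; exact c21
                  · rw [fpair_gt hf hpf hlt, if_neg hnei]; exact c01
            · rw [f_lone hUin hUout htu hsu hlu hpu]; exact c21
    · -- u is a source
      rw [f_src hUin]
      have hei : extIn E v := ⟨u, huv, fun hp => hUin ⟨v, hp.1⟩⟩
      by_cases hVout : ∃ y, E v y
      · by_cases hsv : star E v
        · rw [f_star hVin hVout htv hsv]; exact c02
        · by_cases hlv : ∃ w, pr E v w ∧ star E w
          · exfalso
            obtain ⟨w, hw, hsw⟩ := hlv
            have htw : ¬ tri E w := fun h => htv (tri_closed hloop hP4 h (Or.inl hw.1))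
            have hedges := star_leaf hloop hK3 hP4 hsw htw ⟨hw.2, hw.1⟩
            have huw := hedges.2 u huv
            exact hUin ⟨v, by rw [huw]; exact hw.1⟩
          · by_cases hpv : ∃ w, pr E v w
            · rw [f_pair hVin hVout htv hsv hlv hpv]
              by_cases hf : extIn E v ∧ extOut E v
              · rw [fpair_f hf]; exact c02
              · by_cases hpf : ∃ w, pr E v w ∧ extIn E w ∧ extOut E w
                · rw [fpair_pf hf hpf, if_pos hei]; exact c01
                · by_cases hlt : ∃ w, pr E v w ∧ WellOrderingRel v w
                  · rw [fpair_lt hf hpf hlt]; exact c02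
                  · rw [fpair_gt hf hpf hlt, if_pos hei]; exact c01
            · rw [f_lone hVin hVout htv hsv hlv hpv]; exact c02
      · rw [f_snk hVin hVout]; exact c01
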